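/- arXiv:2302.12627 — 4 statements merged into one kernel-verified Lean document; each statement's English description precedes it below -/
import Mathlib

section
/- Suppose Y = X θ⁰ + ε and |E| = 1 with X_K = (x_E, X_F) full rank, e being the index in E. Then σ T_{Y:E.F} = Δ₁ + Δ₂, where Δ₁ = √(1 − R²(x_E, X_F)) · θ⁰_e · ‖x_E‖₂ and Δ₂ = ‖Y − X_K θ⁰_K‖₂ · R(Y − X_K θ⁰_K, (I − P_F)x_E). -/
open Matrix

noncomputable def specNorm {m n : Type*} [Fintype m] [Fintype n] [DecidableEq n]
    (M : Matrix m n ℝ) : ℝ :=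
  ‖(Matrix.toEuclideanLin M).toContinuousLinearMap‖

noncomputable def proj {n : ℕ} {m : Type*} [Fintype m] [DecidableEq m]
    (X : Matrix (Fin n) m ℝ) : Matrix (Fin n) (Fin n) ℝ :=
  X * (Xᵀ * X)⁻¹ * Xᵀ

noncomputable def nrm {m : Type*} [Fintype m] (v : m → ℝ) : ℝ :=
  Real.sqrt (∑ i, (v i)^2)

theorem aux_inj_tXX {n : ℕ} {m : Type*} [Fintype m] [DecidableEq m]
    (X : Matrix (Fin n) m ℝ)
    (hinj : Function.Injective X.mulVec) : IsUnit (Xᵀ * X) := by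
  rw [← Matrix.mulVec_injective_iff_isUnit]
  intro u v huv
  have hz : (Xᵀ * X) *ᵥ (u - v) = 0 := by rw [mulVec_sub, huv, sub_self]
  have h0 : (u - v) ⬝ᵥ ((Xᵀ * X) *ᵥ (u - v)) = X *ᵥ (u - v) ⬝ᵥ X *ᵥ (u - v) := by
    rw [← mulVec_mulVec, dotProduct_mulVec, vecMul_transpose]
  rw [hz, dotProduct_zero] at h0
  have h1 : X *ᵥ (u - v) = 0 := dotProduct_self_eq_zero.mp h0.symm
  rw [mulVec_sub, sub_eq_zero] at h1
  exact hinj h1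

theorem aux_rank_inj {m n : Type*} [Fintype m] [Fintype n] (A : Matrix m n ℝ)
    (h : A.rank = Fintype.card n) : Function.Injective A.mulVec := by
  rw [show A.mulVec = A.mulVecLin from rfl, ← LinearMap.ker_eq_bot,
    ← Submodule.finrank_eq_zero]
  have h2 := LinearMap.finrank_range_add_finrank_ker A.mulVecLin
  rw [Module.finrank_fintype_fun_eq_card] at h2
  unfold Matrix.rank at h
  omega

theorem aux_dot_self_pos {m : Type*} [Fintype m] {v : m → ℝ} (hv : v ≠ 0) :
    0 < v ⬝ᵥ v := by
  rcases lt_or_eq_of_le (Finset.sum_nonneg fun i _ => mul_self_nonneg (v i)) with h | h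
  · exact h
  · exact absurd (dotProduct_self_eq_zero.mp h.symm) hv

theorem aux_nrm_sq {m : Type*} [Fintype m] (v : m → ℝ) :
    nrm v = Real.sqrt (v ⬝ᵥ v) := by
  unfold nrm dotProduct
  congr 1
  exact Finset.sum_congr rfl fun i _ => sq (v i)

/-- Signal/noise decomposition of the Wald statistic for a single covariate:
σT = Δ₁ + Δ₂. -/
theorem stmt_7 {n b : ℕ} (xE : Fin n → ℝ) (XF : Matrix (Fin n) (Fin b) ℝ)
    (Y : Fin n → ℝ) (θ0e : ℝ) (θ0F : Fin b → ℝ) (σ : ℝ) (hσ : 0 < σ)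
    (hrank : (Matrix.fromCols (Matrix.of fun i (_ : Fin 1) => xE i) XF).rank = 1 + b)
    (hw : (1 - proj XF) *ᵥ xE ≠ 0)
    (hres : Y - (θ0e • xE + XF *ᵥ θ0F) ≠ 0) :
    let XK := Matrix.fromCols (Matrix.of fun i (_ : Fin 1) => xE i) XF
    let θK := (XKᵀ * XK)⁻¹ *ᵥ (XKᵀ *ᵥ Y)
    let T := σ⁻¹ * θK (Sum.inl 0) / Real.sqrt (((XKᵀ * XK)⁻¹) (Sum.inl 0) (Sum.inl 0))
    let w := (1 - proj XF) *ᵥ xE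
    let resid := Y - (θ0e • xE + XF *ᵥ θ0F)
    let R := nrm (proj XF *ᵥ xE) / nrm xE
    σ * T = Real.sqrt (1 - R^2) * θ0e * nrm xE
        + nrm resid * ((resid ⬝ᵥ w) / (nrm resid * nrm w)) := by
  intro XK θK T w resid R
  set c₁ : Matrix (Fin n) (Fin 1) ℝ := Matrix.of fun i (_ : Fin 1) => xE i with hc₁
  -- injectivity of XK
  have hinjK : Function.Injective XK.mulVec := by
    apply aux_rank_inj
    rw [hrank]; simp
  -- mulVec of XK on Sum.elim
  have hXKmul : ∀ (u : Fin 1 → ℝ) (v : Fin b → ℝ),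
      XK *ᵥ Sum.elim u v = u 0 • xE + XF *ᵥ v := by
    intro u v
    rw [show XK = Matrix.fromCols c₁ XF from rfl, fromCols_mulVec_sumElim]
    congr 1
    ext i
    simp [hc₁, Matrix.mulVec, dotProduct, mul_comm]
  have hinjF : Function.Injective XF.mulVec := by
    intro u v huv
    have h := hinjK (a₁ := Sum.elim 0 u) (a₂ := Sum.elim 0 v) (by
      show XK *ᵥ _ = XK *ᵥ _
      rw [hXKmul, hXKmul]
      simpa using huv)
    have := congrFun h
    funext j
    simpa using this (Sum.inr j)
  have hFU : IsUnit (XFᵀ * XF) := aux_inj_tXX XF hinjF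
  have hAU : IsUnit (XKᵀ * XK) := aux_inj_tXX XK hinjK
  have hFd : IsUnit (XFᵀ * XF).det := (Matrix.isUnit_iff_isUnit_det _).mp hFU
  have hAd : IsUnit (XKᵀ * XK).det := (Matrix.isUnit_iff_isUnit_det _).mp hAU
  -- projection facts
  have hPsymm : (proj XF)ᵀ = proj XF := by
    unfold proj
    rw [transpose_mul, transpose_mul, transpose_transpose, transpose_nonsing_inv,
      transpose_mul, transpose_transpose, Matrix.mul_assoc]
  have hPP : proj XF * proj XF = proj XF := by
    show XF * (XFᵀ * XF)⁻¹ * XFᵀ * (XF * (XFᵀ * XF)⁻¹ * XFᵀ) = XF * (XFᵀ * XF)⁻¹ * XFᵀ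
    calc XF * (XFᵀ * XF)⁻¹ * XFᵀ * (XF * (XFᵀ * XF)⁻¹ * XFᵀ)
        = XF * ((XFᵀ * XF)⁻¹ * ((XFᵀ * XF) * ((XFᵀ * XF)⁻¹ * XFᵀ))) := by
          simp only [Matrix.mul_assoc]
      _ = XF * ((XFᵀ * XF)⁻¹ * XFᵀ) := by
          rw [Matrix.mul_nonsing_inv_cancel_left _ _ hFd]
      _ = XF * (XFᵀ * XF)⁻¹ * XFᵀ := by rw [Matrix.mul_assoc]
  have hXFtP : XFᵀ * (1 - proj XF) = 0 := by
    show XFᵀ * (1 - XF * (XFᵀ * XF)⁻¹ * XFᵀ) = 0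
    rw [Matrix.mul_sub, Matrix.mul_one]
    simp only [← Matrix.mul_assoc]
    rw [Matrix.mul_nonsing_inv _ hFd, Matrix.one_mul, sub_self]
  have hXFw : XFᵀ *ᵥ w = 0 := by
    show XFᵀ *ᵥ ((1 - proj XF) *ᵥ xE) = 0
    rw [mulVec_mulVec, hXFtP, zero_mulVec]
  have h1Pt : (1 - proj XF)ᵀ = 1 - proj XF := by
    rw [transpose_sub, transpose_one, hPsymm]
  have h1P1P : (1 - proj XF) * (1 - proj XF) = 1 - proj XF := by
    simp only [Matrix.sub_mul, Matrix.mul_sub, Matrix.one_mul, Matrix.mul_one, hPP]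
    abel
  have hwP : (1 - proj XF) *ᵥ w = w := by
    show (1 - proj XF) *ᵥ ((1 - proj XF) *ᵥ xE) = (1 - proj XF) *ᵥ xE
    rw [mulVec_mulVec, h1P1P]
  have hwx : w ⬝ᵥ xE = w ⬝ᵥ w := by
    conv_rhs => rw [show (w : Fin n → ℝ) = (1 - proj XF) *ᵥ xE from rfl]
    rw [dotProduct_mulVec, ← h1Pt, vecMul_transpose, h1Pt, hwP]
  have hww : 0 < w ⬝ᵥ w := aux_dot_self_pos hw
  have hwXF : ∀ v : Fin b → ℝ, w ⬝ᵥ (XF *ᵥ v) = 0 := by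
    intro v
    rw [dotProduct_mulVec, ← transpose_transpose XF, vecMul_transpose, hXFw,
      zero_dotProduct]
  -- transpose of XK applied to a vector
  have hXKt : ∀ z : Fin n → ℝ, XKᵀ *ᵥ z = Sum.elim (c₁ᵀ *ᵥ z) (XFᵀ *ᵥ z) := by
    intro z
    rw [show XK = Matrix.fromCols c₁ XF from rfl, transpose_fromCols, fromRows_mulVec]
  have hc₁t : ∀ (z : Fin n → ℝ) (j : Fin 1), (c₁ᵀ *ᵥ z) j = xE ⬝ᵥ z := by
    intro z j
    simp [hc₁, Matrix.mulVec, dotProduct]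
  set c : ℝ := (w ⬝ᵥ Y) / (w ⬝ᵥ w) with hc
  set g : Fin b → ℝ := (XFᵀ * XF)⁻¹ *ᵥ (XFᵀ *ᵥ (Y - c • xE)) with hg
  have hXFg : XF *ᵥ g = proj XF *ᵥ (Y - c • xE) := by
    rw [hg, mulVec_mulVec, mulVec_mulVec]
    rfl
  have hpxw : proj XF *ᵥ xE = xE - w := by
    show proj XF *ᵥ xE = xE - (1 - proj XF) *ᵥ xE
    rw [sub_mulVec, one_mulVec]
    abel
  -- the normal equations solution
  have hAeq : (XKᵀ * XK) *ᵥ Sum.elim (fun _ => c) g = XKᵀ *ᵥ Y := by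
    rw [← mulVec_mulVec, hXKmul, hXKt, hXKt]
    have hrowF : XFᵀ *ᵥ ((fun _ : Fin 1 => c) 0 • xE + XF *ᵥ g) = XFᵀ *ᵥ Y := by
      show XFᵀ *ᵥ (c • xE + XF *ᵥ g) = XFᵀ *ᵥ Y
      rw [mulVec_add, hg, mulVec_mulVec, mulVec_mulVec,
        Matrix.mul_nonsing_inv _ hFd, one_mulVec, mulVec_sub]
      abel
    have hrowE : xE ⬝ᵥ ((fun _ : Fin 1 => c) 0 • xE + XF *ᵥ g) = xE ⬝ᵥ Y := by
      show xE ⬝ᵥ (c • xE + XF *ᵥ g) = xE ⬝ᵥ Y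
      rw [hXFg, dotProduct_add, dotProduct_mulVec, ← hPsymm, vecMul_transpose, hpxw]
      simp only [dotProduct_smul, sub_dotProduct, dotProduct_sub, smul_eq_mul]
      have h2 : w ⬝ᵥ Y = c * (w ⬝ᵥ w) := by
        rw [hc]; field_simp
      have h4 : c * (w ⬝ᵥ xE) = w ⬝ᵥ Y := by rw [hwx]; linarith
      linarith
    funext j
    cases j with
    | inl j =>
      simp only [Sum.elim_inl]
      rw [hc₁t, hc₁t]
      have : (j : Fin 1) = 0 := Subsingleton.elim _ _
      exact hrowE
    | inr j =>
      simp only [Sum.elim_inr]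
      exact congrFun hrowF j
  have hθ : θK = Sum.elim (fun _ => c) g := by
    show (XKᵀ * XK)⁻¹ *ᵥ (XKᵀ *ᵥ Y) = _
    rw [← hAeq, mulVec_mulVec, Matrix.nonsing_inv_mul _ hAd, one_mulVec]
  -- the (E,E) entry of the inverse
  set g2 : Fin b → ℝ := (XFᵀ * XF)⁻¹ *ᵥ (XFᵀ *ᵥ ((w ⬝ᵥ w)⁻¹ • xE)) with hg2
  have hXFg2 : XF *ᵥ g2 = proj XF *ᵥ ((w ⬝ᵥ w)⁻¹ • xE) := by
    rw [hg2, mulVec_mulVec, mulVec_mulVec]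
    rfl
  have hAseq : (XKᵀ * XK) *ᵥ Sum.elim (fun _ => (w ⬝ᵥ w)⁻¹) (-g2)
      = Pi.single (Sum.inl 0) 1 := by
    rw [← mulVec_mulVec, hXKmul]
    have h5 : (1 - proj XF) *ᵥ ((w ⬝ᵥ w)⁻¹ • xE) = (w ⬝ᵥ w)⁻¹ • w := by
      rw [mulVec_smul]
    have hz : (fun _ : Fin 1 => (w ⬝ᵥ w)⁻¹) 0 • xE + XF *ᵥ (-g2)
        = (w ⬝ᵥ w)⁻¹ • w := by
      show (w ⬝ᵥ w)⁻¹ • xE + XF *ᵥ (-g2) = (w ⬝ᵥ w)⁻¹ • w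
      rw [mulVec_neg, hXFg2, ← h5, sub_mulVec, one_mulVec]
      abel
    rw [hz, hXKt]
    funext j
    cases j with
    | inl j =>
      have hj : j = 0 := Subsingleton.elim _ _
      subst hj
      simp only [Sum.elim_inl]
      rw [hc₁t]
      rw [dotProduct_smul, smul_eq_mul, dotProduct_comm xE w, hwx,
        inv_mul_cancel₀ hww.ne']
      simp
    | inr j =>
      simp only [Sum.elim_inr]
      rw [mulVec_smul, hXFw]
      simp [Pi.single_eq_of_ne (by simp : (Sum.inr j : Fin 1 ⊕ Fin b) ≠ Sum.inl 0)]
  have hinv00 : ((XKᵀ * XK)⁻¹) (Sum.inl 0) (Sum.inl 0) = (w ⬝ᵥ w)⁻¹ := by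
    have hsol : Sum.elim (fun _ : Fin 1 => (w ⬝ᵥ w)⁻¹) (-g2)
        = (XKᵀ * XK)⁻¹ *ᵥ Pi.single (Sum.inl 0) 1 := by
      rw [← hAseq, mulVec_mulVec, Matrix.nonsing_inv_mul _ hAd, one_mulVec]
    have h6 := congrFun hsol (Sum.inl 0)
    simp only [Sum.elim_inl] at h6
    rw [mulVec_single] at h6
    simpa using h6.symm
  -- norms and positivity
  have hnw : nrm w = Real.sqrt (w ⬝ᵥ w) := aux_nrm_sq w
  have hsw : 0 < Real.sqrt (w ⬝ᵥ w) := Real.sqrt_pos.mpr hww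
  have hT : σ * T = c * Real.sqrt (w ⬝ᵥ w) := by
    show σ * (σ⁻¹ * θK (Sum.inl 0) / Real.sqrt (((XKᵀ * XK)⁻¹) (Sum.inl 0) (Sum.inl 0)))
        = c * Real.sqrt (w ⬝ᵥ w)
    rw [hinv00, hθ]
    simp only [Sum.elim_inl]
    rw [Real.sqrt_inv]
    field_simp
  have hxE0 : xE ≠ 0 := by
    intro h
    exact hw (by rw [h, mulVec_zero])
  have hxx : 0 < xE ⬝ᵥ xE := aux_dot_self_pos hxE0
  have hsx : 0 < Real.sqrt (xE ⬝ᵥ xE) := Real.sqrt_pos.mpr hxx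
  have hpw : (proj XF *ᵥ xE) ⬝ᵥ w = 0 := by
    rw [hpxw, sub_dotProduct, dotProduct_comm xE w, hwx, sub_self]
  have hpp : 0 ≤ (proj XF *ᵥ xE) ⬝ᵥ (proj XF *ᵥ xE) :=
    Finset.sum_nonneg fun i _ => mul_self_nonneg _
  have hpyth : xE ⬝ᵥ xE = (proj XF *ᵥ xE) ⬝ᵥ (proj XF *ᵥ xE) + w ⬝ᵥ w := by
    have hxsum : xE = proj XF *ᵥ xE + w := by rw [hpxw]; abel
    have h7 : xE ⬝ᵥ xE = (proj XF *ᵥ xE + w) ⬝ᵥ (proj XF *ᵥ xE + w) := by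
      rw [← hxsum]
    rw [h7, add_dotProduct, dotProduct_add, dotProduct_add,
      dotProduct_comm w (proj XF *ᵥ xE)]
    rw [hpw]
    ring
  have hΔ1 : Real.sqrt (1 - R ^ 2) * nrm xE = Real.sqrt (w ⬝ᵥ w) := by
    have hR2 : R ^ 2 = ((proj XF *ᵥ xE) ⬝ᵥ (proj XF *ᵥ xE)) / (xE ⬝ᵥ xE) := by
      show (nrm (proj XF *ᵥ xE) / nrm xE) ^ 2 = _
      rw [aux_nrm_sq, aux_nrm_sq, div_pow, Real.sq_sqrt hpp, Real.sq_sqrt hxx.le]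
    have h8 : 1 - R ^ 2 = (w ⬝ᵥ w) / (xE ⬝ᵥ xE) := by
      rw [hR2]
      field_simp
      linarith [hpyth]
    rw [h8, aux_nrm_sq, Real.sqrt_div hww.le]
    field_simp
  have hnres : nrm resid ≠ 0 := by
    rw [aux_nrm_sq]
    exact (Real.sqrt_pos.mpr (aux_dot_self_pos hres)).ne'
  have hwY : w ⬝ᵥ Y = θ0e * (w ⬝ᵥ w) + resid ⬝ᵥ w := by
    have h9 : Y = resid + (θ0e • xE + XF *ᵥ θ0F) := by
      show Y = Y - (θ0e • xE + XF *ᵥ θ0F) + (θ0e • xE + XF *ᵥ θ0F)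
      abel
    conv_lhs => rw [h9]
    rw [dotProduct_add, dotProduct_add, dotProduct_smul, smul_eq_mul, hwXF, hwx,
      dotProduct_comm w resid]
    ring
  rw [hT]
  have hΔ1' : Real.sqrt (1 - R ^ 2) * θ0e * nrm xE = θ0e * Real.sqrt (w ⬝ᵥ w) := by
    rw [mul_comm (Real.sqrt (1 - R ^ 2)) θ0e, mul_assoc, hΔ1]
  rw [hΔ1', hnw]
  have hΔ2 : nrm resid * ((resid ⬝ᵥ w) / (nrm resid * Real.sqrt (w ⬝ᵥ w)))
      = (resid ⬝ᵥ w) / Real.sqrt (w ⬝ᵥ w) := by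
    field_simp
  rw [hΔ2, hc, hwY]
  have hs2 : Real.sqrt (w ⬝ᵥ w) * Real.sqrt (w ⬝ᵥ w) = w ⬝ᵥ w :=
    Real.mul_self_sqrt hww.le
  rw [← hs2]
  field_simp
  rw [Real.sqrt_sq hsw.le]
  ring
end

section
/- Let Y, X_E, X_F have centred columns with (X_E, X_F) full rank, and let T_{(I−P_F)Y:E} be the known-σ Wald statistic vector from regressing (I − P_F)Y on X_E. Then ‖T_{(I−P_F)Y:E}‖_∞ ≤ σ⁻¹ ‖Y‖₂ { R(Y, X_E) + R(X_E, X_F) }, where R(Y, X_E) = ‖P_E Y‖₂/‖Y‖₂ is the sample multiple correlation of Y with X_E and R(X_E, X_F) = ‖P_E P_F‖₂. -/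
open Matrix

lemma nrm_eq_norm {m : Type*} [Fintype m] (v : m → ℝ) :
    nrm v = ‖(WithLp.equiv 2 (m → ℝ)).symm v‖ := by
  rw [EuclideanSpace.norm_eq, nrm]
  congr 1
  refine Finset.sum_congr rfl fun i _ => ?_
  rw [show ((WithLp.equiv 2 (m → ℝ)).symm v).ofLp i = v i from rfl, Real.norm_eq_abs, sq_abs]

lemma nrm_nonneg {m : Type*} [Fintype m] (v : m → ℝ) : 0 ≤ nrm v :=
  Real.sqrt_nonneg _

lemma nrm_sub_le {m : Type*} [Fintype m] (u v : m → ℝ) :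
    nrm (u - v) ≤ nrm u + nrm v := by
  simp only [nrm_eq_norm]
  rw [show (WithLp.equiv 2 (m → ℝ)).symm (u - v)
      = (WithLp.equiv 2 (m → ℝ)).symm u - (WithLp.equiv 2 (m → ℝ)).symm v from rfl]
  exact norm_sub_le _ _

lemma specNorm_mulVec_le {m k : Type*} [Fintype m] [Fintype k] [DecidableEq k]
    (M : Matrix m k ℝ) (v : k → ℝ) : nrm (M *ᵥ v) ≤ specNorm M * nrm v := by
  simp only [nrm_eq_norm]
  have : (WithLp.equiv 2 (m → ℝ)).symm (M *ᵥ v)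
      = (Matrix.toEuclideanLin M).toContinuousLinearMap ((WithLp.equiv 2 (k → ℝ)).symm v) := by
    simp [Matrix.toEuclideanLin_apply]
  rw [this]
  exact (Matrix.toEuclideanLin M).toContinuousLinearMap.le_opNorm _

/-- Sup-norm bound on the Wald statistic vector from regressing (I − P_F)Y on X_E. -/
theorem stmt_10 {n a b : ℕ} (XE : Matrix (Fin n) (Fin a) ℝ) (XF : Matrix (Fin n) (Fin b) ℝ)
    (Y : Fin n → ℝ) (σ : ℝ) (hσ : 0 < σ) (hY : Y ≠ 0)
    (hcY : ∑ i, Y i = 0) (hcE : ∀ j, ∑ i, XE i j = 0) (hcF : ∀ j, ∑ i, XF i j = 0)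
    (hrank : (Matrix.fromCols XE XF).rank = a + b) :
    let Ytil := (1 - proj XF) *ᵥ Y
    let θ := (XEᵀ * XE)⁻¹ *ᵥ (XEᵀ *ᵥ Ytil)
    let T := fun j => σ⁻¹ * θ j / Real.sqrt (((XEᵀ * XE)⁻¹) j j)
    ∀ j, |T j| ≤ σ⁻¹ * nrm Y *
        (nrm (proj XE *ᵥ Y) / nrm Y + specNorm (proj XE * proj XF)) := by
  intro Ytil θ T j
  set G := XEᵀ * XE with hGdef
  -- injectivity of XE
  have hker : LinearMap.ker (Matrix.fromCols XE XF).mulVecLin = ⊥ := by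
    have h1 := LinearMap.finrank_range_add_finrank_ker (Matrix.fromCols XE XF).mulVecLin
    rw [show Module.finrank ℝ (Fin a ⊕ Fin b → ℝ) = a + b by
      simp [Module.finrank_pi]] at h1
    have h2 : Matrix.rank (Matrix.fromCols XE XF)
        = Module.finrank ℝ (LinearMap.range (Matrix.fromCols XE XF).mulVecLin) := rfl
    rw [← h2, hrank] at h1
    have : Module.finrank ℝ (LinearMap.ker (Matrix.fromCols XE XF).mulVecLin) = 0 := by
      omega
    exact Submodule.finrank_eq_zero.mp this
  have hEinj : ∀ x : Fin a → ℝ, XE *ᵥ x = 0 → x = 0 := by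
    intro x hx
    have hmem : (Sum.elim x (0 : Fin b → ℝ)) ∈
        LinearMap.ker (Matrix.fromCols XE XF).mulVecLin := by
      simp only [LinearMap.mem_ker, Matrix.mulVecLin_apply]
      rw [Matrix.fromCols_mulVec_sumElim, hx, Matrix.mulVec_zero, add_zero]
    rw [hker, Submodule.mem_bot] at hmem
    funext i
    have := congrFun hmem (Sum.inl i)
    simpa using this
  -- positive definiteness of G
  have hG : G.PosDef := by
    refine Matrix.PosDef.of_dotProduct_mulVec_pos (Matrix.isHermitian_conjTranspose_mul_self XE) fun x hx => ?_
    have hq : dotProduct (star x) (G *ᵥ x) = ∑ i, ((XE *ᵥ x) i) ^ 2 := by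
      rw [hGdef, ← Matrix.mulVec_mulVec, dotProduct_mulVec, Matrix.vecMul_transpose]
      simp [dotProduct, pow_two]
    rw [hq]
    have hne : XE *ᵥ x ≠ 0 := fun h => hx (hEinj x h)
    have : ∃ i, (XE *ᵥ x) i ≠ 0 := by
      by_contra h
      push_neg at h
      exact hne (funext h)
    obtain ⟨i, hi⟩ := this
    exact Finset.sum_pos' (fun k _ => sq_nonneg _) ⟨i, Finset.mem_univ i, lt_of_le_of_ne (sq_nonneg _) (Ne.symm (pow_ne_zero 2 hi))⟩
  have hGi : (G⁻¹).PosDef := hG.inv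
  have hdet : IsUnit G.det := (Matrix.isUnit_iff_isUnit_det G).mp hG.isUnit
  have hGG : G⁻¹ * G = 1 := Matrix.nonsing_inv_mul G hdet
  have hGG' : G * G⁻¹ = 1 := Matrix.mul_nonsing_inv G hdet
  have hGsym : Gᵀ = G := by rw [hGdef, Matrix.transpose_mul, Matrix.transpose_transpose]
  have hGisym : (G⁻¹)ᵀ = G⁻¹ := by rw [Matrix.transpose_nonsing_inv, hGsym]
  set e : Fin a → ℝ := Pi.single j 1 with he
  have hepos : e ≠ 0 := by
    intro h
    have := congrFun h j
    simp [he] at this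
  have hjj : 0 < (G⁻¹) j j := by
    have h := hGi.dotProduct_mulVec_pos hepos
    have : dotProduct (star e) (G⁻¹ *ᵥ e) = (G⁻¹) j j := by
      simp [he, dotProduct, Matrix.mulVec, Pi.single_apply, Finset.sum_ite_eq,
        Finset.sum_ite_eq', mul_comm]
    rwa [this] at h
  set u : Fin n → ℝ := XE *ᵥ (G⁻¹ *ᵥ e) with hu
  set w : Fin n → ℝ := XE *ᵥ θ with hw
  have hGform : ∀ p q : Fin a → ℝ,
      dotProduct (XE *ᵥ p) (XE *ᵥ q) = dotProduct p (G *ᵥ q) := by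
    intro p q
    rw [hGdef, ← Matrix.mulVec_mulVec, dotProduct_mulVec p, Matrix.vecMul_transpose,
      dotProduct_mulVec (XE *ᵥ p)]
  have huw : dotProduct u w = θ j := by
    rw [hu, hw, hGform]
    rw [dotProduct_mulVec (G⁻¹ *ᵥ e)]
    have : (G⁻¹ *ᵥ e) ᵥ* G = e := by
      rw [show G⁻¹ *ᵥ e = e ᵥ* (G⁻¹)ᵀ by rw [← Matrix.mulVec_transpose, Matrix.transpose_transpose],
        Matrix.vecMul_vecMul, hGisym, hGG, Matrix.vecMul_one]
    rw [this, he]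
    simp [dotProduct, Pi.single_apply]
  have huu : dotProduct u u = (G⁻¹) j j := by
    rw [hu, hGform, Matrix.mulVec_mulVec, hGG', Matrix.one_mulVec]
    simp [he, dotProduct, Matrix.mulVec, Pi.single_apply, Finset.sum_ite_eq', mul_comm]
  -- Cauchy-Schwarz
  have hcs : (θ j) ^ 2 ≤ (G⁻¹) j j * ∑ i, (w i) ^ 2 := by
    have h := Finset.sum_mul_sq_le_sq_mul_sq Finset.univ u w
    rw [← huu, ← huw]
    simpa [dotProduct, pow_two] using h
  have habs : |θ j| ≤ Real.sqrt ((G⁻¹) j j) * nrm w := by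
    have h1 : |θ j| = Real.sqrt ((θ j) ^ 2) := (Real.sqrt_sq_eq_abs _).symm
    rw [h1, nrm, ← Real.sqrt_mul hjj.le]
    exact Real.sqrt_le_sqrt hcs
  have hT : |T j| ≤ σ⁻¹ * nrm w := by
    have hTj : T j = σ⁻¹ * θ j / Real.sqrt ((G⁻¹) j j) := rfl
    rw [hTj, abs_div, abs_mul, abs_of_pos (inv_pos.mpr hσ),
      abs_of_pos (Real.sqrt_pos.mpr hjj)]
    rw [div_le_iff₀ (Real.sqrt_pos.mpr hjj)]
    calc σ⁻¹ * |θ j| ≤ σ⁻¹ * (Real.sqrt ((G⁻¹) j j) * nrm w) :=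
          mul_le_mul_of_nonneg_left habs (inv_pos.mpr hσ).le
      _ = σ⁻¹ * nrm w * Real.sqrt ((G⁻¹) j j) := by ring
  -- identify w
  have hwsplit : w = proj XE *ᵥ Y - (proj XE * proj XF) *ᵥ Y := by
    rw [hw]
    show XE *ᵥ (G⁻¹ *ᵥ (XEᵀ *ᵥ ((1 - proj XF) *ᵥ Y))) = _
    rw [Matrix.mulVec_mulVec, Matrix.mulVec_mulVec, Matrix.mulVec_mulVec]
    simp only [proj, ← hGdef]
    rw [Matrix.mul_sub, Matrix.mul_one, Matrix.sub_mulVec]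
  have hnw : nrm w ≤ nrm (proj XE *ᵥ Y) + specNorm (proj XE * proj XF) * nrm Y := by
    rw [hwsplit]
    exact (nrm_sub_le _ _).trans (by
      gcongr
      exact specNorm_mulVec_le _ _)
  have hYpos : 0 < nrm Y := by
    rw [nrm_eq_norm]
    refine norm_pos_iff.mpr fun h => hY ?_
    have := congrArg (WithLp.equiv 2 (Fin n → ℝ)) h
    simpa using this
  have hrhs : σ⁻¹ * nrm Y * (nrm (proj XE *ᵥ Y) / nrm Y + specNorm (proj XE * proj XF))
      = σ⁻¹ * (nrm (proj XE *ᵥ Y) + specNorm (proj XE * proj XF) * nrm Y) := by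
    field_simp
  rw [hrhs]
  exact hT.trans (mul_le_mul_of_nonneg_left hnw (inv_pos.mpr hσ).le)
end

section
/- Let Σ ∈ ℝ^{r̂×r̂} be symmetric positive definite, let Σ_mm be its leading principal r_m × r_m block, and define Γ = I − Σ^{1/2} [ (Σ_mm⁻¹, 0); (0, 0) ] Σ^{1/2}. Then Γ is symmetric positive semi-definite with eigenvalues consisting of exactly r_m zeroes and r̂ − r_m ones; in particular Γ is an orthogonal projection of rank r̂ − r_m. -/
open Matrix

/-- The positive semidefinite square root of a positive semidefinite matrix
(the definition removed from Mathlib, restored with its old value). -/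
noncomputable def Matrix.PosSemidef.sqrt {n 𝕜 : Type*} [Fintype n] [DecidableEq n] [RCLike 𝕜]
    [PartialOrder 𝕜] [StarOrderedRing 𝕜] {A : Matrix n n 𝕜} (hA : A.PosSemidef) : Matrix n n 𝕜 :=
  hA.1.eigenvectorUnitary.1 * diagonal ((↑) ∘ (√·) ∘ hA.1.eigenvalues) *
    (star hA.1.eigenvectorUnitary : Matrix n n 𝕜)

theorem sqrt_mul_self_real {n : Type*} [Fintype n] [DecidableEq n] {A : Matrix n n ℝ}
    (hA : A.PosSemidef) : hA.sqrt * hA.sqrt = A := by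
  have hU : (star hA.1.eigenvectorUnitary : Matrix n n ℝ) * hA.1.eigenvectorUnitary.1 = 1 :=
    Unitary.coe_star_mul_self _
  conv_rhs => rw [hA.1.spectral_theorem, Unitary.conjStarAlgAut_apply]
  simp only [Matrix.PosSemidef.sqrt, Matrix.mul_assoc]
  rw [← Matrix.mul_assoc (star _ : Matrix n n ℝ), hU, Matrix.one_mul, ← Matrix.mul_assoc (diagonal _),
    diagonal_mul_diagonal]
  congr 3
  funext i
  simp [Real.mul_self_sqrt (hA.eigenvalues_nonneg i)]

theorem sqrt_herm_real {n : Type*} [Fintype n] [DecidableEq n] {A : Matrix n n ℝ}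
    (hA : A.PosSemidef) : (hA.sqrt)ᴴ = hA.sqrt := by
  simp only [Matrix.PosSemidef.sqrt, star_eq_conjTranspose, conjTranspose_mul,
    conjTranspose_conjTranspose, Matrix.mul_assoc, diagonal_conjTranspose]
  congr 2

set_option maxHeartbeats 1000000 in
/-- Γ = I − Σ^{1/2} diag(Σ_mm⁻¹, 0) Σ^{1/2} is an orthogonal projection of rank
r̂ − r_m (eigenvalues: r_m zeroes and r̂ − r_m ones). -/
theorem stmt_15 {rm s : ℕ}
    (Sg : Matrix (Fin rm ⊕ Fin s) (Fin rm ⊕ Fin s) ℝ) (hSg : Sg.PosDef) :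
    let Smm := Sg.toBlocks₁₁
    let B := Matrix.fromBlocks Smm⁻¹ 0 0 0
    let sq := hSg.posSemidef.sqrt
    let Γ := 1 - sq * B * sq
    Γ.PosSemidef ∧ Γ * Γ = Γ ∧ Γ.rank = s := by
  intro Smm B sq Γ
  -- Smm is positive definite
  have hSmm : Smm.PosDef := by
    rw [posDef_iff_dotProduct_mulVec]
    constructor
    · ext i j
      have := congrFun (congrFun hSg.1 (Sum.inl i)) (Sum.inl j)
      simpa [Smm, Matrix.toBlocks₁₁, Matrix.conjTranspose_apply] using this
    · intro x hx
      have hy : (Sum.elim x 0 : Fin rm ⊕ Fin s → ℝ) ≠ 0 := by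
        intro h
        apply hx
        ext i
        exact congrFun h (Sum.inl i)
      have h := hSg.dotProduct_mulVec_pos hy
      have heq : (star (Sum.elim x 0) : Fin rm ⊕ Fin s → ℝ) ⬝ᵥ Sg *ᵥ (Sum.elim x 0)
          = star x ⬝ᵥ Smm *ᵥ x := by
        simp [dotProduct, Matrix.mulVec, Fintype.sum_sum_type,
          Smm, Matrix.toBlocks₁₁, Matrix.of_apply]
      rwa [heq] at h
  have hdetSmm : IsUnit Smm.det := isUnit_iff_ne_zero.mpr hSmm.det_pos.ne'
  have hinv : Smm⁻¹ * Smm = 1 := Matrix.nonsing_inv_mul _ hdetSmm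
  -- sqrt facts
  have hsq : sq * sq = Sg := sqrt_mul_self_real hSg.posSemidef
  have hsqH : sqᴴ = sq := sqrt_herm_real hSg.posSemidef
  have hdetsq : IsUnit sq.det := by
    have h2 : sq.det * sq.det = Sg.det := by rw [← Matrix.det_mul, hsq]
    have : Sg.det ≠ 0 := hSg.det_pos.ne'
    refine isUnit_iff_ne_zero.mpr fun h0 => this ?_
    rw [← h2, h0, mul_zero]
  have hSgblocks : Sg = Matrix.fromBlocks Smm Sg.toBlocks₁₂ Sg.toBlocks₂₁ Sg.toBlocks₂₂ :=
    (Matrix.fromBlocks_toBlocks Sg).symm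
  -- B * Sg * B = B
  have hBSgB : B * Sg * B = B := by
    show Matrix.fromBlocks Smm⁻¹ 0 0 0 * Sg * Matrix.fromBlocks Smm⁻¹ 0 0 0
        = Matrix.fromBlocks Smm⁻¹ 0 0 0
    conv_lhs => rw [hSgblocks]
    rw [Matrix.fromBlocks_multiply, Matrix.fromBlocks_multiply]
    simp [hinv]
  -- idempotence of P = sq * B * sq
  have hP : sq * B * sq * (sq * B * sq) = sq * B * sq := by
    have e1 : sq * B * sq * (sq * B * sq) = sq * B * (sq * sq) * B * sq := by
      simp only [Matrix.mul_assoc]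
    have e2 : sq * B * Sg * B * sq = sq * (B * Sg * B) * sq := by
      simp only [Matrix.mul_assoc]
    rw [e1, hsq, e2, hBSgB]
  -- idempotence of Γ
  have hΓΓ : Γ * Γ = Γ := by
    show (1 - sq * B * sq) * (1 - sq * B * sq) = 1 - sq * B * sq
    rw [sub_mul, one_mul, mul_sub, mul_one, hP, sub_self, sub_zero]
  -- symmetry of Γ
  have hSmmInvH : (Smm⁻¹)ᴴ = Smm⁻¹ := by
    rw [Matrix.conjTranspose_nonsing_inv, hSmm.1]
  have hBH : Bᴴ = B := by
    show (Matrix.fromBlocks Smm⁻¹ 0 0 0)ᴴ = Matrix.fromBlocks Smm⁻¹ 0 0 0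
    rw [Matrix.fromBlocks_conjTranspose, hSmmInvH]
    simp
  have hΓH : Γᴴ = Γ := by
    show (1 - sq * B * sq)ᴴ = 1 - sq * B * sq
    simp only [Matrix.conjTranspose_sub, Matrix.conjTranspose_one,
      Matrix.conjTranspose_mul, hsqH, hBH, Matrix.mul_assoc]
  have hpsd : Γ.PosSemidef := by
    have := Matrix.posSemidef_conjTranspose_mul_self Γ
    rwa [hΓH, hΓΓ] at this
  refine ⟨hpsd, hΓΓ, ?_⟩
  -- rank computation
  have hsqinv : sq * sq⁻¹ = 1 := Matrix.mul_nonsing_inv _ hdetsq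
  set C : Matrix (Fin rm) (Fin s) ℝ := -(Smm⁻¹ * Sg.toBlocks₁₂) with hC
  set T : Matrix (Fin rm ⊕ Fin s) (Fin rm ⊕ Fin s) ℝ := Matrix.fromBlocks 1 C 0 1 with hT
  set Tinv : Matrix (Fin rm ⊕ Fin s) (Fin rm ⊕ Fin s) ℝ := Matrix.fromBlocks 1 (-C) 0 1 with hTinv
  set D : Matrix (Fin rm ⊕ Fin s) (Fin rm ⊕ Fin s) ℝ := Matrix.fromBlocks 0 0 0 1 with hD
  have hM : (1 : Matrix (Fin rm ⊕ Fin s) (Fin rm ⊕ Fin s) ℝ) - B * Sg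
      = Matrix.fromBlocks 0 C 0 1 := by
    show (1 : Matrix (Fin rm ⊕ Fin s) (Fin rm ⊕ Fin s) ℝ) - Matrix.fromBlocks Smm⁻¹ 0 0 0 * Sg = _
    conv_lhs => rw [hSgblocks]
    rw [Matrix.fromBlocks_multiply]
    ext (i | i) (j | j) <;>
      simp [hinv, hC, Matrix.one_apply, Matrix.sub_apply]
  have hTDT : T * D * Tinv = Matrix.fromBlocks 0 C 0 1 := by
    rw [hT, hD, hTinv, Matrix.fromBlocks_multiply, Matrix.fromBlocks_multiply]
    simp
  have hΓeq : Γ = sq * T * D * (Tinv * sq⁻¹) := by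
    have e1 : sq * T * D * (Tinv * sq⁻¹) = sq * (T * D * Tinv) * sq⁻¹ := by
      simp only [Matrix.mul_assoc]
    rw [e1, hTDT, ← hM]
    show (1 : Matrix _ _ ℝ) - sq * B * sq = _
    have e3 : sq * (B * Sg) * sq⁻¹ = sq * B * sq := by
      conv_lhs => rw [← hsq]
      simp only [Matrix.mul_assoc]
      rw [hsqinv, Matrix.mul_one]
    rw [mul_sub, mul_one, sub_mul, hsqinv, e3]
  have hdetT : T.det = 1 := by
    rw [hT, Matrix.det_fromBlocks_zero₂₁]; simp
  have hdetTinv : Tinv.det = 1 := by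
    rw [hTinv, Matrix.det_fromBlocks_zero₂₁]; simp
  have hu1 : IsUnit (Tinv * sq⁻¹).det := by
    rw [Matrix.det_mul, hdetTinv, one_mul, Matrix.det_nonsing_inv]
    exact isUnit_iff_ne_zero.mpr (by
      simpa using inv_ne_zero (isUnit_iff_ne_zero.mp hdetsq))
  have hu2 : IsUnit (sq * T).det := by
    rw [Matrix.det_mul, hdetT, mul_one]
    exact hdetsq
  have hrankD : D.rank = s := by
    have hdiag : D = Matrix.diagonal (Sum.elim (0 : Fin rm → ℝ) (1 : Fin s → ℝ)) := by
      rw [hD]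
      conv_lhs => rw [← Matrix.diagonal_zero, ← Matrix.diagonal_one,
        Matrix.fromBlocks_diagonal]
      rfl
    rw [hdiag, Matrix.rank_diagonal]
    have e : {i : Fin rm ⊕ Fin s // Sum.elim (0 : Fin rm → ℝ) (1 : Fin s → ℝ) i ≠ 0} ≃ Fin s :=
      { toFun := fun x => match x with
          | ⟨Sum.inl _, h⟩ => absurd rfl h
          | ⟨Sum.inr j, _⟩ => j
        invFun := fun j => ⟨Sum.inr j, one_ne_zero⟩
        left_inv := by rintro ⟨i | j, h⟩
                       · exact absurd rfl h
                       · rfl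
        right_inv := fun j => rfl }
    rw [Fintype.card_congr e, Fintype.card_fin]
  rw [hΓeq, Matrix.rank_mul_eq_left_of_isUnit_det _ _ hu1,
    Matrix.rank_mul_eq_right_of_isUnit_det _ _ hu2, hrankD]
end

section
/- Let P_F and P_{E∖{e}} be orthogonal projections with ‖P_F P_{E∖{e}}‖₂ < 1, and let Δ_e = (I − P_{E∖{e}}) Σ_{m≥1}(P_F P_{E∖{e}})^m P_F − P_{E∖{e}} P_F. Then the matrix (P_F + Δ_e)(I − P_{E∖{e}}) is an orthogonal projection matrix. -/
open Matrix

noncomputable instance contStarCLM {n : ℕ} :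
    ContinuousStar (EuclideanSpace ℝ (Fin n) →L[ℝ] EuclideanSpace ℝ (Fin n)) := by
  constructor
  have h : (star : (EuclideanSpace ℝ (Fin n) →L[ℝ] EuclideanSpace ℝ (Fin n)) → _) =
      fun A => ContinuousLinearMap.adjoint A := by
    funext A; exact ContinuousLinearMap.star_eq_adjoint A
  rw [h]
  exact (ContinuousLinearMap.adjoint (𝕜 := ℝ)).toLinearIsometry.continuous

set_option maxHeartbeats 1000000 in
/-- (P_F + Δ_e)(I − P_{E∖{e}}) is an orthogonal projection matrix. -/
theorem stmt_18 {n : ℕ} (P Q : Matrix (Fin n) (Fin n) ℝ)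
    (hPsymm : Pᵀ = P) (hPidem : P * P = P)
    (hQsymm : Qᵀ = Q) (hQidem : Q * Q = Q)
    (hnorm : specNorm (P * Q) < 1) :
    let Δ := (1 - Q) * (∑' m : ℕ, (P * Q)^(m+1) * P) - Q * P
    let M := (P + Δ) * (1 - Q)
    Mᵀ = M ∧ M * M = M := by
  intro Δ M
  set φ := Matrix.toEuclideanCLM (𝕜 := ℝ) (n := Fin n) with hφdef
  set p := φ P with hp
  set q := φ Q with hq
  set a := p * q with hadef
  have ha : ‖a‖ < 1 := by
    have h : specNorm (P * Q) = ‖φ (P * Q)‖ := rfl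
    rw [h, _root_.map_mul] at hnorm
    exact hnorm
  have hpidem : p * p = p := by rw [hp, ← _root_.map_mul, hPidem]
  have hqidem : q * q = q := by rw [hq, ← _root_.map_mul, hQidem]
  have hPstar : star P = P := by
    rw [Matrix.star_eq_conjTranspose]; ext i j
    simpa [Matrix.conjTranspose_apply] using (congrFun (congrFun hPsymm j) i).symm
  have hQstar : star Q = Q := by
    rw [Matrix.star_eq_conjTranspose]; ext i j
    simpa [Matrix.conjTranspose_apply] using (congrFun (congrFun hQsymm j) i).symm
  have hpstar : star p = p := by rw [hp, ← map_star, hPstar]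
  have hqstar : star q = q := by rw [hq, ← map_star, hQstar]
  -- summability in B
  have hsumB : Summable (fun m : ℕ => a ^ (m + 1) * p) := by
    have h1 : Summable (fun m : ℕ => a ^ m * p) :=
      (summable_geometric_of_norm_lt_one ha).mul_right p
    exact h1.comp_injective Nat.succ_injective
  -- continuous linear versions of φ and φ.symm
  obtain ⟨Lφ, hLφ⟩ : ∃ Lφ : Matrix (Fin n) (Fin n) ℝ →L[ℝ]
      (EuclideanSpace ℝ (Fin n) →L[ℝ] EuclideanSpace ℝ (Fin n)), ∀ x, Lφ x = φ x :=
    ⟨LinearMap.toContinuousLinearMap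
      { toFun := φ, map_add' := map_add φ, map_smul' := map_smul φ }, fun _ => rfl⟩
  obtain ⟨Lψ, hLψ⟩ : ∃ Lψ : (EuclideanSpace ℝ (Fin n) →L[ℝ] EuclideanSpace ℝ (Fin n))
      →L[ℝ] Matrix (Fin n) (Fin n) ℝ, ∀ x, Lψ x = φ.symm x :=
    ⟨LinearMap.toContinuousLinearMap
      { toFun := φ.symm, map_add' := map_add φ.symm, map_smul' := map_smul φ.symm },
      fun _ => rfl⟩
  -- summability in matrix space
  have hsumM : Summable (fun m : ℕ => (P * Q) ^ (m + 1) * P) := by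
    have hcont : Continuous (φ.symm : _ → Matrix (Fin n) (Fin n) ℝ) := by
      have he : (φ.symm : _ → Matrix (Fin n) (Fin n) ℝ) = Lψ := by
        funext x; rw [hLψ]
      rw [he]; exact Lψ.continuous
    have h := hsumB.map (AddMonoidHom.mk' (φ.symm) (_root_.map_add φ.symm)) hcont
    convert h using 2 with m
    simp only [Function.comp, AddMonoidHom.mk'_apply]
    rw [hadef, hp, hq, ← _root_.map_mul φ, ← _root_.map_pow, ← _root_.map_mul]
    exact (φ.symm_apply_apply _).symm
  -- φ of the tsum
  set s := ∑' m : ℕ, a ^ (m + 1) * p with hs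
  have hφtsum : φ (∑' m : ℕ, (P * Q) ^ (m + 1) * P) = s := by
    rw [← hLφ, Lφ.map_tsum hsumM, hs]
    congr 1; funext m
    simp only [hLφ, _root_.map_mul, _root_.map_pow, hadef, hp, hq]
  -- recurrence: s = a * p + a * s
  have hrec : s = a * p + a * s := by
    have h1 : HasSum (fun m : ℕ => a ^ (m + 1 + 1) * p) (a * s) := by
      have h2 := hsumB.hasSum.mul_left a
      simp only [← mul_assoc, ← pow_succ'] at h2
      exact h2
    calc s = a ^ (0 + 1) * p + ∑' m : ℕ, a ^ (m + 1 + 1) * p := Summable.tsum_eq_zero_add hsumB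
      _ = a * p + a * s := by rw [h1.tsum_eq]; norm_num
  set t := p + s with ht
  have htrec : t = p + a * t := by
    conv_rhs => rw [ht, mul_add, ← hrec]
  have hpa : p * a = a := by rw [hadef, ← mul_assoc, hpidem]
  have hpt : p * t = t := by
    conv_lhs => rw [htrec]
    rw [mul_add, hpidem, ← mul_assoc, hpa, ← htrec]
  have hu : (1 - a) * t = p := by
    rw [sub_mul, one_mul]
    nth_rewrite 1 [htrec]
    exact add_sub_cancel_right p (a * t)
  -- the unit 1 - a
  set u : (EuclideanSpace ℝ (Fin n) →L[ℝ] EuclideanSpace ℝ (Fin n))ˣ :=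
    Units.oneSub a ha with hudef
  have hucoe : (u : EuclideanSpace ℝ (Fin n) →L[ℝ] EuclideanSpace ℝ (Fin n)) = 1 - a := rfl
  -- key: t * (1 - q) * t = t
  have hkey : t * (1 - q) * t = t := by
    have h2 : (1 - a) * (t * (1 - q) * t) = (1 - a) * t := by
      calc (1 - a) * (t * (1 - q) * t)
          = ((1 - a) * t) * (1 - q) * t := by rw [← mul_assoc, ← mul_assoc]
        _ = p * (1 - q) * t := by rw [hu]
        _ = p * t - p * q * t := by rw [mul_sub, mul_one, sub_mul]
        _ = t - a * t := by rw [hpt, hadef, mul_assoc]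
        _ = (1 - a) * t := by rw [sub_mul, one_mul]
    rw [← hucoe] at h2
    have h3 := congrArg (fun x => (↑u⁻¹ : EuclideanSpace ℝ (Fin n) →L[ℝ]
      EuclideanSpace ℝ (Fin n)) * x) h2
    simpa only [Units.inv_mul_cancel_left] using h3
  -- star t = t
  have hps : ∀ k : ℕ, p * (q * p) ^ k = (p * q) ^ k * p := by
    intro k; induction k with
    | zero => simp
    | succ k ih =>
      rw [pow_succ, pow_succ, ← mul_assoc, ih, mul_assoc, mul_assoc, mul_assoc]
  have hstars : star s = s := by
    rw [hs, tsum_star (α := EuclideanSpace ℝ (Fin n) →L[ℝ] EuclideanSpace ℝ (Fin n))]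
    congr 1; funext m
    rw [StarMul.star_mul, star_pow,
      show star a = q * p by rw [hadef, StarMul.star_mul, hpstar, hqstar],
      hpstar, hps, ← hadef]
  have hstart : star t = t := by rw [ht]; exact (star_add p s).trans (by rw [hpstar, hstars])
  -- φ M = (1-q) * t * (1-q)
  have hφM : φ M = (1 - q) * t * (1 - q) := by
    show φ ((P + ((1 - Q) * (∑' m : ℕ, (P * Q)^(m+1) * P) - Q * P)) * (1 - Q))
      = (1 - q) * t * (1 - q)
    rw [_root_.map_mul, _root_.map_add, _root_.map_sub, _root_.map_mul, _root_.map_mul,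
      _root_.map_sub, _root_.map_one, hφtsum, ← hp, ← hq, ht]
    simp only [sub_mul, mul_sub, add_mul, mul_add, one_mul, mul_one, mul_assoc]
    abel
  have hstar_a : star a = q * p := by rw [hadef, StarMul.star_mul, hpstar, hqstar]
  constructor
  · -- symmetry
    apply φ.injective
    show φ Mᵀ = φ M
    have hMstar : star M = Mᵀ := by
      ext i j
      simp [Matrix.star_eq_conjTranspose, Matrix.conjTranspose_apply]
    rw [← hMstar, map_star, hφM, StarMul.star_mul, StarMul.star_mul]
    have h1q' : star (1 - q) = 1 - q := by
      rw [star_sub (r := (1 : EuclideanSpace ℝ (Fin n) →L[ℝ] EuclideanSpace ℝ (Fin n))),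
        star_one, hqstar]
    rw [h1q', hstart, mul_assoc]
  · -- idempotent
    apply φ.injective
    show φ (M * M) = φ M
    rw [_root_.map_mul, hφM]
    have h1q : (1 - q) * (1 - q) = 1 - q := by
      rw [sub_mul, mul_sub, mul_sub, hqidem, mul_one, one_mul]
      abel
    calc ((1 - q) * t * (1 - q)) * ((1 - q) * t * (1 - q))
        = (1 - q) * (t * ((1 - q) * (1 - q)) * t) * (1 - q) := by
          simp only [mul_assoc]
      _ = (1 - q) * (t * (1 - q) * t) * (1 - q) := by rw [h1q]
      _ = (1 - q) * t * (1 - q) := by rw [hkey]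
end
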